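/- Let reads be assigned snapshot timestamps and writes commit timestamps from a strictly increasing global counter. If each read query with timestamp t observes exactly the set of versions with creation timestamp ≤ t, and write queries are serializable in timestamp order, then the schedule consisting of all reads and writes is conflict-serializable, with serial order: writes ordered by commit timestamp and each read placed immediately after the write whose timestamp equals its snapshot timestamp. -/
import Mathlib

/-- Lemma 1: writes `W_i` (`i : Fin n`, commit timestamp `i+1`) and reads `q`
with snapshot timestamp `t q ≤ n`.  If dependency edges only go from earlier
writes to later writes, from `W_i` to a read `q` only when `i+1 ≤ t q`, from a
read `q` to `W_j` only when `t q < j+1`, and never between two reads, then the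
dependency graph is acyclic, i.e. the schedule is conflict-serializable. -/
theorem snapshot_reads_serializable {R : Type*} (n : ℕ)
    (t : R → ℕ) (ht : ∀ q, t q ≤ n)
    (Dep : (Fin n ⊕ R) → (Fin n ⊕ R) → Prop)
    (hWW : ∀ i j : Fin n, Dep (.inl i) (.inl j) → (i : ℕ) < (j : ℕ))
    (hWR : ∀ (i : Fin n) (q : R), Dep (.inl i) (.inr q) → (i : ℕ) + 1 ≤ t q)
    (hRW : ∀ (q : R) (j : Fin n), Dep (.inr q) (.inl j) → t q < (j : ℕ) + 1)
    (hRR : ∀ q q' : R, ¬ Dep (.inr q) (.inr q')) :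
    ∀ x : Fin n ⊕ R, ¬ Relation.TransGen Dep x x := by
  set f : (Fin n ⊕ R) → ℕ := fun x => match x with
    | .inl i => 2 * (i : ℕ) + 2
    | .inr q => 2 * t q + 1 with hf
  have mono : ∀ x y, Dep x y → f x < f y := by
    rintro (i | q) (j | q')
    · intro h; have := hWW i j h; simp [hf]; omega
    · intro h; have := hWR i q' h; simp [hf]; omega
    · intro h; have := hRW q j h; simp [hf]; omega
    · intro h; exact absurd h (hRR q q')
  have key : ∀ x y, Relation.TransGen Dep x y → f x < f y := by
    intro x y h
    induction h with
    | single h => exact mono _ _ h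
    | tail _ h ih => exact lt_trans ih (mono _ _ h)
  intro x hx
  exact absurd (key x x hx) (lt_irrefl _)
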